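/- arXiv:1601.03622 — 2 statements merged into one kernel-verified Lean document; each statement's English description precedes it below -/
import Mathlib

section
/- Work in the polynomial ring ℚ[x_2, x_3, x_4] and let ĝ(ζ) := ζ + x_2ζ^3 + x_3ζ^4 + x_4ζ^5 ∈ ℚ[x_2,x_3,x_4][[ζ]]. Define Δ̂_1(ζ) := ĝ(ζ) − ζ and Δ̂_{m+1}(ζ) := Δ̂_m(ĝ(ζ)) − Δ̂_m(ζ) for m ≥ 1, and for each m ≥ 1 let A_m, B_m, C_m ∈ ℚ[x_2,x_3,x_4] be the coefficients of ζ^{2m+1}, ζ^{2m+2}, ζ^{2m+3} in Δ̂_m. Then for every m ≥ 1: (i) ord(Δ̂_m) ≥ 2m+1; (ii) A_1 = x_2, B_1 = x_3, C_1 = x_4; and (iii) A_{m+1} = (2m+1)x_2·A_m, B_{m+1} = (2m+1)x_3·A_m + (2m+2)x_2·B_m, and C_{m+1} = (2m+1)(m·x_2^2 + x_4)·A_m + (2m+2)x_3·B_m + (2m+3)x_2·C_m. -/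
/-- Composition of formal power series: `f.comp g = f ∘ g`, the power series obtained by
substituting `g` into `f`.  (This gives the usual composition whenever the constant
coefficient of `g` is zero.) -/
noncomputable def PowerSeries.comp {R : Type*} [CommSemiring R] (f g : PowerSeries R) :
    PowerSeries R :=
  PowerSeries.mk fun n =>
    ∑ i ∈ Finset.range (n + 1), PowerSeries.coeff (R := R) i f * PowerSeries.coeff (R := R) n (g ^ i)

/-- The polynomial ring `ℚ[x₂, x₃, x₄]`, with `x₂ = X 0`, `x₃ = X 1`, `x₄ = X 2`. -/
abbrev Rq : Type := MvPolynomial (Fin 3) ℚ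

/-- The power series `ĝ(ζ) = ζ + x₂ζ³ + x₃ζ⁴ + x₄ζ⁵` over `ℚ[x₂, x₃, x₄]`. -/
noncomputable def ghat : PowerSeries Rq :=
  PowerSeries.X
    + PowerSeries.C (R := Rq) (MvPolynomial.X 0) * PowerSeries.X ^ 3
    + PowerSeries.C (R := Rq) (MvPolynomial.X 1) * PowerSeries.X ^ 4
    + PowerSeries.C (R := Rq) (MvPolynomial.X 2) * PowerSeries.X ^ 5

open PowerSeries MvPolynomial Finset

noncomputable def uu : PowerSeries Rq :=
  1 + PowerSeries.C (R := Rq) (MvPolynomial.X 0) * PowerSeries.X ^ 2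
    + PowerSeries.C (R := Rq) (MvPolynomial.X 1) * PowerSeries.X ^ 3
    + PowerSeries.C (R := Rq) (MvPolynomial.X 2) * PowerSeries.X ^ 4

lemma ghat_eq : ghat = PowerSeries.X * uu := by unfold ghat uu; ring

lemma coeff_ghat_pow (i d : ℕ) :
    PowerSeries.coeff (R := Rq) d (ghat ^ i) =
      if i ≤ d then PowerSeries.coeff (R := Rq) (d - i) (uu ^ i) else 0 := by
  rw [ghat_eq, mul_pow, PowerSeries.coeff_X_pow_mul']

lemma coeff_comp (f : PowerSeries Rq) (d : ℕ) :
    PowerSeries.coeff (R := Rq) d (f.comp ghat) =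
      ∑ i ∈ Finset.range (d + 1),
        PowerSeries.coeff (R := Rq) i f * PowerSeries.coeff (R := Rq) (d - i) (uu ^ i) := by
  rw [PowerSeries.comp, PowerSeries.coeff_mk]
  refine Finset.sum_congr rfl fun i hi => ?_
  have := Finset.mem_range.mp hi
  rw [coeff_ghat_pow, if_pos (by omega : i ≤ d)]

lemma coeff_uu0 : PowerSeries.coeff (R := Rq) 0 uu = 1 := by
  simp [uu, PowerSeries.coeff_one, PowerSeries.coeff_X_pow]
lemma coeff_uu1 : PowerSeries.coeff (R := Rq) 1 uu = 0 := by
  simp [uu, PowerSeries.coeff_one, PowerSeries.coeff_X_pow]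
lemma coeff_uu2 : PowerSeries.coeff (R := Rq) 2 uu = MvPolynomial.X 0 := by
  simp [uu, PowerSeries.coeff_one, PowerSeries.coeff_X_pow]
lemma coeff_uu3 : PowerSeries.coeff (R := Rq) 3 uu = MvPolynomial.X 1 := by
  simp [uu, PowerSeries.coeff_one, PowerSeries.coeff_X_pow]
lemma coeff_uu4 : PowerSeries.coeff (R := Rq) 4 uu = MvPolynomial.X 2 := by
  simp [uu, PowerSeries.coeff_one, PowerSeries.coeff_X_pow]

lemma coeff_upow (i : ℕ) :
    PowerSeries.coeff (R := Rq) 0 (uu ^ i) = 1 ∧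
    PowerSeries.coeff (R := Rq) 1 (uu ^ i) = 0 ∧
    PowerSeries.coeff (R := Rq) 2 (uu ^ i) = (i : Rq) * MvPolynomial.X 0 ∧
    PowerSeries.coeff (R := Rq) 3 (uu ^ i) = (i : Rq) * MvPolynomial.X 1 ∧
    PowerSeries.coeff (R := Rq) 4 (uu ^ i) =
      (i : Rq) * MvPolynomial.X 2 + ((i.choose 2 : ℕ) : Rq) * MvPolynomial.X 0 ^ 2 := by
  induction i with
  | zero => simp [PowerSeries.coeff_one]
  | succ i ih =>
    obtain ⟨h0, h1, h2, h3, h4⟩ := ih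
    rw [pow_succ]
    have key : ∀ n : ℕ, PowerSeries.coeff (R := Rq) n (uu ^ i * uu) =
        ∑ k ∈ range (n + 1), PowerSeries.coeff (R := Rq) k (uu ^ i) * PowerSeries.coeff (R := Rq) (n - k) uu := by
      intro n
      rw [PowerSeries.coeff_mul, Finset.Nat.sum_antidiagonal_eq_sum_range_succ_mk]
    refine ⟨?_, ?_, ?_, ?_, ?_⟩
    · rw [key]; simp [Finset.sum_range_succ, h0, coeff_uu0]
    · rw [key]; simp [Finset.sum_range_succ, h0, h1, coeff_uu0, coeff_uu1]
    · rw [key]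
      simp only [Finset.sum_range_succ, Finset.sum_range_zero]
      norm_num [h0, h1, h2, coeff_uu0, coeff_uu1, coeff_uu2]
      ring
    · rw [key]
      simp only [Finset.sum_range_succ, Finset.sum_range_zero]
      norm_num [h0, h1, h2, h3, coeff_uu0, coeff_uu1, coeff_uu2, coeff_uu3]
      ring
    · rw [key]
      simp only [Finset.sum_range_succ, Finset.sum_range_zero]
      norm_num [h0, h1, h2, h3, h4, coeff_uu0, coeff_uu1, coeff_uu2, coeff_uu3, coeff_uu4]
      rw [Nat.choose_succ_succ i 1, Nat.choose_one_right]
      push_cast; ring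

lemma key (f : PowerSeries Rq) (n : ℕ)
    (hf : ∀ i < n, PowerSeries.coeff (R := Rq) i f = 0) :
    (∀ d < n + 2, PowerSeries.coeff (R := Rq) d (f.comp ghat - f) = 0) ∧
    PowerSeries.coeff (R := Rq) (n + 2) (f.comp ghat - f) =
      (n : Rq) * MvPolynomial.X 0 * PowerSeries.coeff (R := Rq) n f ∧
    PowerSeries.coeff (R := Rq) (n + 3) (f.comp ghat - f) =
      (n : Rq) * MvPolynomial.X 1 * PowerSeries.coeff (R := Rq) n f
        + ((n + 1 : ℕ) : Rq) * MvPolynomial.X 0 * PowerSeries.coeff (R := Rq) (n + 1) f ∧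
    PowerSeries.coeff (R := Rq) (n + 4) (f.comp ghat - f) =
      ((n : Rq) * MvPolynomial.X 2 + ((n.choose 2 : ℕ) : Rq) * MvPolynomial.X 0 ^ 2) *
          PowerSeries.coeff (R := Rq) n f
        + ((n + 1 : ℕ) : Rq) * MvPolynomial.X 1 * PowerSeries.coeff (R := Rq) (n + 1) f
        + ((n + 2 : ℕ) : Rq) * MvPolynomial.X 0 * PowerSeries.coeff (R := Rq) (n + 2) f := by
  have hz : ∀ (F : ℕ → Rq), (∑ i ∈ Finset.range n, PowerSeries.coeff (R := Rq) i f * F i) = 0 :=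
    fun F => Finset.sum_eq_zero fun i hi => by
      rw [hf i (Finset.mem_range.mp hi), zero_mul]
  have peel : ∀ j : ℕ, PowerSeries.coeff (R := Rq) (n + j) (f.comp ghat) =
      ∑ k ∈ Finset.range (j + 1),
        PowerSeries.coeff (R := Rq) (n + k) f * PowerSeries.coeff (R := Rq) (j - k) (uu ^ (n + k)) := by
    intro j
    rw [coeff_comp, show n + j + 1 = n + (j + 1) from by omega, Finset.sum_range_add (fun i => PowerSeries.coeff (R := Rq) i f *
      PowerSeries.coeff (R := Rq) (n + j - i) (uu ^ i)) n (j + 1), hz, zero_add]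
    exact Finset.sum_congr rfl fun k _ => by rw [show n + j - (n + k) = j - k by omega]
  have hcu : PowerSeries.constantCoeff (R := Rq) uu = 1 := by
    rw [← PowerSeries.coeff_zero_eq_constantCoeff_apply]; exact coeff_uu0
  refine ⟨?_, ?_, ?_, ?_⟩
  · intro d hd
    rcases Nat.lt_or_ge d n with h | h
    · rw [map_sub, coeff_comp, Finset.sum_eq_zero fun i hi => by
        rw [hf i (by have := Finset.mem_range.mp hi; omega), zero_mul],
        hf d h, sub_zero]
    · obtain ⟨j, rfl, hj⟩ : ∃ j, d = n + j ∧ j < 2 := ⟨d - n, by omega, by omega⟩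
      interval_cases j
      · rw [map_sub, peel 0]
        simp [hcu]
      · rw [map_sub, peel 1]
        simp [Finset.sum_range_succ, (coeff_upow n).2.1, hcu]
  · rw [map_sub, peel 2]
    simp only [Finset.sum_range_succ, Finset.sum_range_zero]
    norm_num [(coeff_upow n).2.2.1, (coeff_upow (n+1)).2.1, hcu]
    ring
  · rw [map_sub, peel 3]
    simp only [Finset.sum_range_succ, Finset.sum_range_zero]
    norm_num [(coeff_upow n).2.2.2.1, (coeff_upow (n+1)).2.2.1, (coeff_upow (n+2)).2.1,
      hcu]
    ring
  · rw [map_sub, peel 4]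
    simp only [Finset.sum_range_succ, Finset.sum_range_zero]
    norm_num [(coeff_upow n).2.2.2.2, (coeff_upow (n+1)).2.2.2.1, (coeff_upow (n+2)).2.2.1,
      (coeff_upow (n+3)).2.1, hcu]
    ring

lemma choose_cast (m : ℕ) :
    (((2 * m + 1).choose 2 : ℕ) : Rq) = ((2 * m + 1 : ℕ) : Rq) * (m : Rq) := by
  have h : (2 * m + 1).choose 2 = (2 * m + 1) * m := by
    rw [Nat.choose_two_right, show 2 * m + 1 - 1 = m * 2 by omega,
      Nat.mul_div_assoc, Nat.mul_div_cancel _ (by norm_num)]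
    exact Dvd.intro m (by ring)
  rw [h]; push_cast; ring

theorem delta_hat_coefficient_recurrences
    (Δ : ℕ → PowerSeries Rq)
    (hΔ1 : Δ 1 = ghat - PowerSeries.X)
    (hΔ : ∀ m : ℕ, 1 ≤ m → Δ (m + 1) = PowerSeries.comp (Δ m) ghat - Δ m) :
    (∀ m : ℕ, 1 ≤ m → ((2 * m + 1 : ℕ) : ℕ∞) ≤ (Δ m).order) ∧
    (PowerSeries.coeff (R := Rq) 3 (Δ 1) = MvPolynomial.X 0 ∧
      PowerSeries.coeff (R := Rq) 4 (Δ 1) = MvPolynomial.X 1 ∧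
      PowerSeries.coeff (R := Rq) 5 (Δ 1) = MvPolynomial.X 2) ∧
    (∀ m : ℕ, 1 ≤ m →
      PowerSeries.coeff (R := Rq) (2 * (m + 1) + 1) (Δ (m + 1)) =
        ((2 * m + 1 : ℕ) : Rq) * MvPolynomial.X 0 * PowerSeries.coeff (R := Rq) (2 * m + 1) (Δ m) ∧
      PowerSeries.coeff (R := Rq) (2 * (m + 1) + 2) (Δ (m + 1)) =
        ((2 * m + 1 : ℕ) : Rq) * MvPolynomial.X 1 * PowerSeries.coeff (R := Rq) (2 * m + 1) (Δ m)
          + ((2 * m + 2 : ℕ) : Rq) * MvPolynomial.X 0 *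
              PowerSeries.coeff (R := Rq) (2 * m + 2) (Δ m) ∧
      PowerSeries.coeff (R := Rq) (2 * (m + 1) + 3) (Δ (m + 1)) =
        ((2 * m + 1 : ℕ) : Rq) * ((m : Rq) * MvPolynomial.X 0 ^ 2 + MvPolynomial.X 2) *
              PowerSeries.coeff (R := Rq) (2 * m + 1) (Δ m)
          + ((2 * m + 2 : ℕ) : Rq) * MvPolynomial.X 1 *
              PowerSeries.coeff (R := Rq) (2 * m + 2) (Δ m)
          + ((2 * m + 3 : ℕ) : Rq) * MvPolynomial.X 0 *
              PowerSeries.coeff (R := Rq) (2 * m + 3) (Δ m)) := by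
  have horder : ∀ m : ℕ, 1 ≤ m → ∀ i < 2 * m + 1, PowerSeries.coeff (R := Rq) i (Δ m) = 0 := by
    intro m hm
    induction m, hm using Nat.le_induction with
    | base =>
      intro i hi
      rw [hΔ1]
      interval_cases i <;>
        simp [ghat, PowerSeries.coeff_X_pow, PowerSeries.coeff_one]
    | succ m hm ih =>
      intro i hi
      rw [hΔ m hm]
      exact (key (Δ m) (2 * m + 1) ih).1 i (by omega)
  refine ⟨fun m hm => PowerSeries.nat_le_order _ _ (horder m hm), ?_, ?_⟩
  · rw [hΔ1]
    refine ⟨?_, ?_, ?_⟩ <;>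
      simp [ghat, PowerSeries.coeff_X_pow, PowerSeries.coeff_one]
  · intro m hm
    obtain ⟨k1, k2, k3, k4⟩ := key (Δ m) (2 * m + 1) (horder m hm)
    refine ⟨?_, ?_, ?_⟩
    · rw [hΔ m hm, show 2 * (m + 1) + 1 = 2 * m + 1 + 2 by ring, k2]
    · rw [hΔ m hm, show 2 * (m + 1) + 2 = 2 * m + 1 + 3 by ring, k3]
    · rw [hΔ m hm, show 2 * (m + 1) + 3 = 2 * m + 1 + 4 by ring, k4, choose_cast]
      rw [show 2 * m + 1 + 1 = 2 * m + 2 by ring, show 2 * m + 1 + 2 = 2 * m + 3 by ring]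
      push_cast
      ring
end

section
/- Work in the polynomial ring ℚ[x_2, x_3, x_4] and let ĝ(ζ) := ζ + x_2ζ^3 + x_3ζ^4 + x_4ζ^5 ∈ ℚ[x_2,x_3,x_4][[ζ]]. Define Δ̂_1(ζ) := ĝ(ζ) − ζ and Δ̂_{m+1}(ζ) := Δ̂_m(ĝ(ζ)) − Δ̂_m(ζ) for m ≥ 1. Then for every m ≥ 1, the coefficient of ζ^{2m+2} in Δ̂_m equals x_2^{m−1}·x_3·((2m+1)!! − (2m)!!). -/
open Nat

/-- The "unit part" of `ghat`: `ghat = X * u`. -/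
noncomputable def DHSCu : PowerSeries Rq :=
  1 + PowerSeries.C (R := Rq) (MvPolynomial.X 0) * PowerSeries.X ^ 2
    + PowerSeries.C (R := Rq) (MvPolynomial.X 1) * PowerSeries.X ^ 3
    + PowerSeries.C (R := Rq) (MvPolynomial.X 2) * PowerSeries.X ^ 4

lemma DHSC_ghat_eq : ghat = PowerSeries.X * DHSCu := by
  unfold ghat DHSCu; ring

lemma DHSC_coeff_u_zero : PowerSeries.coeff (R := Rq) 0 DHSCu = 1 := by
  simp [DHSCu, PowerSeries.coeff_C_mul, PowerSeries.coeff_X_pow]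

lemma DHSC_coeff_u_one : PowerSeries.coeff (R := Rq) 1 DHSCu = 0 := by
  simp [DHSCu, PowerSeries.coeff_C_mul, PowerSeries.coeff_X_pow, PowerSeries.coeff_one]

lemma DHSC_coeff_u_two : PowerSeries.coeff (R := Rq) 2 DHSCu = MvPolynomial.X 0 := by
  simp [DHSCu, PowerSeries.coeff_C_mul, PowerSeries.coeff_X_pow, PowerSeries.coeff_one]

lemma DHSC_coeff_u_three : PowerSeries.coeff (R := Rq) 3 DHSCu = MvPolynomial.X 1 := by
  simp [DHSCu, PowerSeries.coeff_C_mul, PowerSeries.coeff_X_pow, PowerSeries.coeff_one]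

lemma DHSC_coeff_u_pow (i : ℕ) :
    PowerSeries.coeff (R := Rq) 0 (DHSCu ^ i) = 1 ∧
    PowerSeries.coeff (R := Rq) 1 (DHSCu ^ i) = 0 ∧
    PowerSeries.coeff (R := Rq) 2 (DHSCu ^ i) = (i : Rq) * MvPolynomial.X 0 ∧
    PowerSeries.coeff (R := Rq) 3 (DHSCu ^ i) = (i : Rq) * MvPolynomial.X 1 := by
  induction i with
  | zero => simp [PowerSeries.coeff_one]
  | succ k ih =>
    obtain ⟨h0, h1, h2, h3⟩ := ih
    rw [pow_succ]
    refine ⟨?_, ?_, ?_, ?_⟩ <;>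
      rw [PowerSeries.coeff_mul, Finset.Nat.sum_antidiagonal_eq_sum_range_succ_mk] <;>
      simp [Finset.sum_range_succ, h0, h1, h2, h3, DHSC_coeff_u_zero, DHSC_coeff_u_one,
        DHSC_coeff_u_two, DHSC_coeff_u_three] <;>
      ring

lemma DHSC_coeff_ghat_pow_add (i k : ℕ) :
    PowerSeries.coeff (R := Rq) (i + k) (ghat ^ i) = PowerSeries.coeff (R := Rq) k (DHSCu ^ i) := by
  rw [DHSC_ghat_eq, mul_pow, add_comm i k, PowerSeries.coeff_X_pow_mul]

lemma DHSC_coeff_ghat_pow_lt {n i : ℕ} (h : n < i) :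
    PowerSeries.coeff (R := Rq) n (ghat ^ i) = 0 := by
  have : PowerSeries.X ^ i ∣ ghat ^ i := by
    rw [DHSC_ghat_eq, mul_pow]; exact dvd_mul_right _ _
  exact PowerSeries.X_pow_dvd_iff.mp this n h

lemma DHSC_coeff_ghat_pow_self (i : ℕ) :
    PowerSeries.coeff (R := Rq) i (ghat ^ i) = 1 := by
  have := DHSC_coeff_ghat_pow_add i 0
  rw [add_zero] at this
  rw [this, (DHSC_coeff_u_pow i).1]

theorem delta_hat_second_coefficient
    (Δ : ℕ → PowerSeries Rq)
    (hΔ1 : Δ 1 = ghat - PowerSeries.X)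
    (hΔ : ∀ m : ℕ, 1 ≤ m → Δ (m + 1) = PowerSeries.comp (Δ m) ghat - Δ m) :
    ∀ m : ℕ, 1 ≤ m →
      PowerSeries.coeff (R := Rq) (2 * m + 2) (Δ m) =
        MvPolynomial.X 0 ^ (m - 1) * MvPolynomial.X 1 *
          ((((2 * m + 1)‼ : ℕ) : Rq) - (((2 * m)‼ : ℕ) : Rq)) := by
  suffices H : ∀ m : ℕ, 1 ≤ m →
      (∀ i, i ≤ 2 * m → PowerSeries.coeff (R := Rq) i (Δ m) = 0) ∧
      PowerSeries.coeff (R := Rq) (2 * m + 1) (Δ m)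
        = (((2 * m - 1)‼ : ℕ) : Rq) * MvPolynomial.X 0 ^ m ∧
      PowerSeries.coeff (R := Rq) (2 * m + 2) (Δ m) =
        MvPolynomial.X 0 ^ (m - 1) * MvPolynomial.X 1 *
          ((((2 * m + 1)‼ : ℕ) : Rq) - (((2 * m)‼ : ℕ) : Rq)) by
    exact fun m hm => (H m hm).2.2
  intro m hm
  induction m with
  | zero => omega
  | succ k ih =>
    rcases Nat.eq_or_lt_of_le hm with h1 | h1
    · -- base case : k = 0
      have hk : k = 0 := by omega
      subst hk
      norm_num [hΔ1, ghat, PowerSeries.coeff_C_mul, PowerSeries.coeff_X,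
        PowerSeries.coeff_X_pow, Nat.doubleFactorial]
      intro i hi
      interval_cases i <;>
        norm_num [PowerSeries.coeff_C_mul, PowerSeries.coeff_X, PowerSeries.coeff_X_pow]
    · -- inductive step : 1 ≤ k
      have hk : 1 ≤ k := by omega
      obtain ⟨hz, ha, hb⟩ := ih hk
      have hrec := hΔ k hk
      -- coefficient of comp
      have hcomp : ∀ n : ℕ, PowerSeries.coeff (R := Rq) n (Δ (k + 1)) =
          (∑ i ∈ Finset.range (n + 1),
            PowerSeries.coeff (R := Rq) i (Δ k) * PowerSeries.coeff (R := Rq) n (ghat ^ i))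
          - PowerSeries.coeff (R := Rq) n (Δ k) := by
        intro n
        rw [hrec, map_sub, PowerSeries.comp, PowerSeries.coeff_mk]
      -- double factorial arithmetic
      have hd1 : (2 * k + 1)‼ = (2 * k + 1) * (2 * k - 1)‼ := by
        obtain ⟨j, rfl⟩ : ∃ j, k = j + 1 := ⟨k - 1, by omega⟩
        rw [show 2 * (j + 1) + 1 = (2 * j + 1) + 2 by ring,
          show 2 * (j + 1) - 1 = 2 * j + 1 by omega, Nat.doubleFactorial_add_two]
      have hd2 : (2 * k + 3)‼ = (2 * k + 3) * (2 * k + 1)‼ := by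
        rw [show 2 * k + 3 = (2 * k + 1) + 2 by ring, Nat.doubleFactorial_add_two]
      have hd3 : (2 * k + 2)‼ = (2 * k + 2) * (2 * k)‼ := by
        rw [show 2 * k + 2 = 2 * k + 2 by ring, Nat.doubleFactorial_add_two]
      -- part 1 : vanishing of low coefficients
      have part1 : ∀ i, i ≤ 2 * (k + 1) → PowerSeries.coeff (R := Rq) i (Δ (k + 1)) = 0 := by
        intro n hn
        rw [hcomp n, sub_eq_zero]
        rw [Finset.sum_eq_single_of_mem n (Finset.self_mem_range_succ n)]
        · rw [DHSC_coeff_ghat_pow_self, mul_one]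
        · intro i hi hne
          have hilt : i < n + 1 := Finset.mem_range.mp hi
          rcases le_or_gt i (2 * k) with h | h
          · rw [hz i h, zero_mul]
          · -- then i = 2*k+1 and n = 2*k+2
            have hi' : i = 2 * k + 1 := by omega
            have hn' : n = 2 * k + 2 := by omega
            subst hi' hn'
            have : PowerSeries.coeff (R := Rq) (2 * k + 2) (ghat ^ (2 * k + 1)) = 0 := by
              have := DHSC_coeff_ghat_pow_add (2 * k + 1) 1
              rw [show 2 * k + 1 + 1 = 2 * k + 2 by ring] at this
              rw [this, (DHSC_coeff_u_pow _).2.1]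
            rw [this, mul_zero]
      -- coefficients of powers of ghat
      have g2 : PowerSeries.coeff (R := Rq) (2 * k + 3) (ghat ^ (2 * k + 1))
          = ((2 * k + 1 : ℕ) : Rq) * MvPolynomial.X 0 := by
        have := DHSC_coeff_ghat_pow_add (2 * k + 1) 2
        rw [show 2 * k + 1 + 2 = 2 * k + 3 by ring] at this
        rw [this, (DHSC_coeff_u_pow _).2.2.1]
      have g3 : PowerSeries.coeff (R := Rq) (2 * k + 4) (ghat ^ (2 * k + 1))
          = ((2 * k + 1 : ℕ) : Rq) * MvPolynomial.X 1 := by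
        have := DHSC_coeff_ghat_pow_add (2 * k + 1) 3
        rw [show 2 * k + 1 + 3 = 2 * k + 4 by ring] at this
        rw [this, (DHSC_coeff_u_pow _).2.2.2]
      have g1a : PowerSeries.coeff (R := Rq) (2 * k + 3) (ghat ^ (2 * k + 2)) = 0 := by
        have := DHSC_coeff_ghat_pow_add (2 * k + 2) 1
        rw [show 2 * k + 2 + 1 = 2 * k + 3 by ring] at this
        rw [this, (DHSC_coeff_u_pow _).2.1]
      have g2a : PowerSeries.coeff (R := Rq) (2 * k + 4) (ghat ^ (2 * k + 2))
          = ((2 * k + 2 : ℕ) : Rq) * MvPolynomial.X 0 := by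
        have := DHSC_coeff_ghat_pow_add (2 * k + 2) 2
        rw [show 2 * k + 2 + 2 = 2 * k + 4 by ring] at this
        rw [this, (DHSC_coeff_u_pow _).2.2.1]
      have g1b : PowerSeries.coeff (R := Rq) (2 * k + 4) (ghat ^ (2 * k + 3)) = 0 := by
        have := DHSC_coeff_ghat_pow_add (2 * k + 3) 1
        rw [show 2 * k + 3 + 1 = 2 * k + 4 by ring] at this
        rw [this, (DHSC_coeff_u_pow _).2.1]
      -- tail sums vanish
      have tail : ∀ n : ℕ, (∑ i ∈ Finset.range (2 * k + 1),
          PowerSeries.coeff (R := Rq) i (Δ k) * PowerSeries.coeff (R := Rq) n (ghat ^ i)) = 0 := by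
        intro n
        refine Finset.sum_eq_zero fun i hi => ?_
        have hile : i ≤ 2 * k := by have := Finset.mem_range.mp hi; omega
        rw [hz i hile, zero_mul]
      refine ⟨part1, ?_, ?_⟩
      · -- coefficient 2(k+1)+1 = 2k+3
        have e : 2 * (k + 1) + 1 = 2 * k + 3 := by ring
        rw [e, hcomp (2 * k + 3)]
        rw [show 2 * k + 3 + 1 = (2 * k + 1) + 1 + 1 + 1 by ring,
          Finset.sum_range_succ, Finset.sum_range_succ, Finset.sum_range_succ, tail]
        rw [g2, g1a, DHSC_coeff_ghat_pow_self, ha]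
        rw [show 2 * (k + 1) - 1 = 2 * k + 1 by omega, hd1]
        push_cast
        ring
      · -- coefficient 2(k+1)+2 = 2k+4
        have e : 2 * (k + 1) + 2 = 2 * k + 4 := by ring
        rw [e, hcomp (2 * k + 4)]
        rw [show 2 * k + 4 + 1 = (2 * k + 1) + 1 + 1 + 1 + 1 by ring,
          Finset.sum_range_succ, Finset.sum_range_succ, Finset.sum_range_succ,
          Finset.sum_range_succ, tail]
        rw [g3, g2a, g1b, show (2 * k + 1) + 1 + 1 + 1 = 2 * k + 4 by ring,
          DHSC_coeff_ghat_pow_self, ha, hb]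
        rw [show 2 * (k + 1) + 1 = 2 * k + 3 by ring,
          show 2 * (k + 1) = 2 * k + 2 by ring,
          show (k + 1) - 1 = k by omega, hd2, hd3, hd1]
        have hx : (MvPolynomial.X 0 : Rq) ^ (k - 1) * MvPolynomial.X 0
            = (MvPolynomial.X 0 : Rq) ^ k := by
          rw [← pow_succ]
          congr 1
          omega
        push_cast
        rw [← hx]
        ring
end
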